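/- Let (p_n) be a sequence with n·p_n → ∞. Then with high probability G ~ 𝔾(n, p_n) has the property that every vertex subset S with |S| ≤ (n·p_n)^{−21}·n spans at most 1.1·|S| edges. -/

import Mathlib

open MeasureTheory Filter

/-- Bernoulli measure on `Bool` with parameter `p`. -/
noncomputable def bernoulliM (p : ℝ) : Measure Bool :=
  (Real.toNNReal p) • Measure.dirac true + (Real.toNNReal (1 - p)) • Measure.dirac false

instance (p : ℝ) : IsFiniteMeasure (bernoulliM p) := by
  unfold bernoulliM; infer_instance

/-- The Erdős–Rényi measure `𝔾(n,p)`: a random symmetric adjacency structure is encoded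
by a matrix of independent Bernoulli(p) entries, of which only the entries strictly
above the diagonal are used (via `GrAdj`). -/
noncomputable def erMeasure (n : ℕ) (p : ℝ) : Measure (Fin n → Fin n → Bool) :=
  Measure.pi fun _ => Measure.pi fun _ => bernoulliM p

/-- Adjacency in the graph encoded by the matrix `A`: distinct vertices `u, v` are
adjacent iff the entry of `A` at the ordered pair `(min u v, max u v)` is `true`. -/
def GrAdj {n : ℕ} (A : Fin n → Fin n → Bool) (u v : Fin n) : Prop :=
  u ≠ v ∧ A (min u v) (max u v) = true

/-- The number of edges spanned by the vertex set `S` (each edge counted once, as an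
ordered pair `(u,v)` with `u < v`). -/
noncomputable def edgesWithin {n : ℕ} (A : Fin n → Fin n → Bool) (S : Set (Fin n)) : ℕ :=
  ({e : Fin n × Fin n | e.1 < e.2 ∧ e.1 ∈ S ∧ e.2 ∈ S ∧ GrAdj A e.1 e.2}).ncard

section Aux

lemma bernoulliM_true {p : ℝ} : bernoulliM p {true} = ENNReal.ofReal p := by
  simp [bernoulliM, Measure.dirac_apply, ENNReal.ofReal, ENNReal.smul_def, -Measure.coe_nnreal_smul]

lemma bernoulliM_univ {p : ℝ} (h0 : 0 ≤ p) (h1 : p ≤ 1) : bernoulliM p Set.univ = 1 := by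
  simp [bernoulliM, ENNReal.smul_def, -Measure.coe_nnreal_smul]
  rw [← ENNReal.coe_add, ← Real.toNNReal_add h0 (by linarith)]
  norm_num

lemma erMeasure_cyl {n : ℕ} {p : ℝ} (h0 : 0 ≤ p) (h1 : p ≤ 1) (T : Finset (Fin n × Fin n)) :
    erMeasure n p {A | ∀ e ∈ T, A e.1 e.2 = true} = ENNReal.ofReal p ^ T.card := by
  have hset : {A : Fin n → Fin n → Bool | ∀ e ∈ T, A e.1 e.2 = true}
      = Set.pi Set.univ (fun i => Set.pi Set.univ
          (fun j => if (i, j) ∈ T then {true} else Set.univ)) := by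
    ext A
    simp only [Set.mem_setOf_eq, Set.mem_univ_pi]
    constructor
    · intro h i j
      by_cases hij : (i, j) ∈ T
      · simp [hij, h (i, j) hij]
      · simp [hij]
    · intro h e he
      have := h e.1 e.2
      rw [if_pos (by simpa using he)] at this
      simpa using this
  rw [hset, erMeasure, Measure.pi_pi]
  simp_rw [Measure.pi_pi, apply_ite (bernoulliM p), bernoulliM_true, bernoulliM_univ h0 h1]
  rw [← Finset.prod_product']
  have : ∀ e : Fin n × Fin n,
      (if (e.1, e.2) ∈ T then ENNReal.ofReal p else 1) = (if e ∈ T then ENNReal.ofReal p else 1) :=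
    fun e => by rw [Prod.mk.eta]
  simp_rw [this]
  rw [Finset.prod_ite_mem]
  rw [show Finset.univ ×ˢ Finset.univ ∩ T = T by rw [Finset.univ_product_univ, Finset.univ_inter],
    Finset.prod_const]


lemma pow_self_le_fact (s : ℕ) : (s : ℝ) ^ s ≤ 3 ^ s * s.factorial := by
  have h := Real.pow_div_factorial_le_exp (x := (s : ℝ)) (Nat.cast_nonneg s) s
  have he : Real.exp s ≤ 3 ^ s := by
    rw [← Real.exp_one_pow]
    exact pow_le_pow_left₀ (Real.exp_pos 1).le
      (le_trans Real.exp_one_lt_d9.le (by norm_num)) s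
  have hf : (0:ℝ) < s.factorial := by exact_mod_cast s.factorial_pos
  rw [div_le_iff₀ hf] at h
  exact h.trans (mul_le_mul_of_nonneg_right he hf.le)

def mm (s : ℕ) : ℕ := 11 * s / 10 + 1

lemma mm_ge (s : ℕ) : 11 * s ≤ 10 * mm s := by unfold mm; omega
lemma mm_gt (s : ℕ) : s < mm s := by unfold mm; omega

lemma choose_le_aux (N k : ℕ) (hk : 0 < k) : (N.choose k : ℝ) * (k:ℝ)^k ≤ (3*N)^k := by
  have h1 : (N.choose k : ℝ) ≤ (N:ℝ)^k / k.factorial := Nat.choose_le_pow_div k N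
  have h2 : (k:ℝ)^k ≤ 3^k * k.factorial := pow_self_le_fact k
  have hf : (0:ℝ) < k.factorial := by exact_mod_cast k.factorial_pos
  calc (N.choose k : ℝ) * (k:ℝ)^k ≤ ((N:ℝ)^k / k.factorial) * (3^k * k.factorial) := by
        apply mul_le_mul h1 h2 (by positivity) (by positivity)
    _ = (3*N)^k := by field_simp [mul_pow]; ring

lemma term_bound {n s : ℕ} {p : ℝ} (h0 : 0 ≤ p) (h1 : p ≤ 1)
    (hx : 100 ≤ (n:ℝ) * p) (hs : (s:ℝ) * ((n:ℝ)*p)^21 ≤ n) :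
    (n.choose s : ℝ) * ((s*s).choose (mm s)) * p ^ (mm s)
      ≤ 40 / ((n:ℝ)*p) * (1/2)^s := by
  have hx0 : (0:ℝ) < (n:ℝ)*p := lt_of_lt_of_le (by norm_num) hx
  rcases Nat.eq_zero_or_pos s with rfl | hs1
  · have : (0 * 0).choose (mm 0) = 0 := by decide
    rw [this]
    simp only [Nat.cast_zero, mul_zero, zero_mul, pow_zero]
    positivity
  set x : ℝ := (n:ℝ)*p with hxdef
  have hp0 : 0 < p := by
    rcases lt_or_ge 0 p with h | h
    · exact h
    · exfalso; nlinarith [Nat.cast_nonneg (α := ℝ) n]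
  have hn0 : (0:ℝ) < n := by nlinarith [Nat.cast_nonneg (α := ℝ) n]
  have hsr : (1:ℝ) ≤ (s:ℝ) := by exact_mod_cast hs1
  have hsr0 : (0:ℝ) < (s:ℝ) := by linarith
  set m : ℕ := mm s with hmdef
  have hm1 : (s:ℝ) ≤ (m:ℝ) := by exact_mod_cast (mm_gt s).le
  -- bound on choose n s
  have hA : (n.choose s : ℝ) ≤ (3*n/s)^s := by
    have := choose_le_aux n s hs1
    rw [div_pow, le_div_iff₀ (pow_pos hsr0 s)]
    exact this
  -- bound on choose (s*s) m
  have hB : ((s*s).choose m : ℝ) ≤ (3*s)^m := by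
    have h := choose_le_aux (s*s) m (Nat.succ_le_succ (Nat.zero_le _))
    have hm0 : (0:ℝ) < (m:ℝ) := by linarith
    have key : ((s*s).choose m : ℝ) * (m:ℝ)^m ≤ ((3*s)*m)^m := by
      refine h.trans ?_
      have : (3*((s:ℝ)*s)) ≤ (3*s)*m := by nlinarith
      have h3 : ((3:ℝ)*((s*s:ℕ):ℝ)) ≤ (3*s)*m := by push_cast; nlinarith
      exact pow_le_pow_left₀ (by positivity) h3 m
    rw [mul_pow] at key
    have hmm : (0:ℝ) < (m:ℝ)^m := by positivity
    exact le_of_mul_le_mul_right key hmm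
  have hx21 : (0:ℝ) < x^21 := by positivity
  have hx20 : (3:ℝ) ≤ x^20 := by
    calc (3:ℝ) ≤ 100^20 := by norm_num
      _ ≤ x^20 := pow_le_pow_left₀ (by norm_num) hx 20
  have hc1 : 3*(s:ℝ)*p ≤ 1 := by
    apply le_of_mul_le_mul_right ?_ hx21
    calc 3*(s:ℝ)*p*x^21 = 3*p*((s:ℝ)*x^21) := by ring
      _ ≤ 3*p*n := by apply mul_le_mul_of_nonneg_left hs (by positivity)
      _ = 3*x := by rw [hxdef]; ring
      _ ≤ x^20*x := by nlinarith
      _ = 1*x^21 := by ring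
  have hc0 : (0:ℝ) ≤ 3*(s:ℝ)*p := by positivity
  have hb0 : (0:ℝ) ≤ 3*(n:ℝ)/(s:ℝ) := by positivity
  have hT : (n.choose s : ℝ) * ((s*s).choose m) * p ^ m
      ≤ (3*(n:ℝ)/(s:ℝ))^s * (3*(s:ℝ)*p)^m := by
    have hBp : ((s*s).choose m : ℝ) * p^m ≤ (3*(s:ℝ)*p)^m := by
      calc ((s*s).choose m : ℝ) * p^m ≤ (3*(s:ℝ))^m * p^m := by
            apply mul_le_mul_of_nonneg_right hB (by positivity)
        _ = (3*(s:ℝ)*p)^m := by rw [← mul_pow]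
    calc (n.choose s : ℝ) * ((s*s).choose m) * p ^ m
        = (n.choose s : ℝ) * (((s*s).choose m : ℝ) * p^m) := by ring
      _ ≤ (3*(n:ℝ)/(s:ℝ))^s * ((3*(s:ℝ)*p)^m) := by
          apply mul_le_mul hA hBp (by positivity) (by positivity)
  have h10 : ((n.choose s : ℝ) * ((s*s).choose m) * p ^ m)^10
      ≤ ((3*(n:ℝ)/(s:ℝ))^10 * (3*(s:ℝ)*p)^11)^s := by
    have hTnn : (0:ℝ) ≤ (n.choose s : ℝ) * ((s*s).choose m) * p ^ m := by positivity
    calc ((n.choose s : ℝ) * ((s*s).choose m) * p ^ m)^10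
        ≤ ((3*(n:ℝ)/(s:ℝ))^s * (3*(s:ℝ)*p)^m)^10 := pow_le_pow_left₀ hTnn hT 10
      _ = ((3*(n:ℝ)/(s:ℝ))^10)^s * (3*(s:ℝ)*p)^(10*m) := by
          simp only [mul_pow, ← pow_mul]
          try ring
      _ ≤ ((3*(n:ℝ)/(s:ℝ))^10)^s * (3*(s:ℝ)*p)^(11*s) := by
          apply mul_le_mul_of_nonneg_left
            (pow_le_pow_of_le_one hc0 hc1 (by rw [hmdef]; exact mm_ge s)) (by positivity)
      _ = ((3*(n:ℝ)/(s:ℝ))^10 * (3*(s:ℝ)*p)^11)^s := by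
          simp only [mul_pow, ← pow_mul]
          try ring
  have hbase : (3*(n:ℝ)/(s:ℝ))^10 * (3*(s:ℝ)*p)^11 ≤ 3^21 / x^10 := by
    have expand : (3*(n:ℝ)/(s:ℝ))^10 * (3*(s:ℝ)*p)^11 = 3^21 * ((n:ℝ)^10 * s * p^11) := by
      field_simp
    rw [expand]
    have key : (n:ℝ)^10 * s * p^11 ≤ 1/x^10 := by
      rw [le_div_iff₀ (by positivity)]
      apply le_of_mul_le_mul_right ?_ hx0
      have k0 : (s:ℝ)*x^21*p ≤ (n:ℝ)*p := by
        exact mul_le_mul_of_nonneg_right hs hp0.le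
      calc (n:ℝ)^10 * s * p^11 * x^10 * x = (s:ℝ)*x^21*p := by rw [hxdef]; ring
        _ ≤ (n:ℝ)*p := k0
        _ = 1*x := by rw [hxdef]; ring
    calc (3:ℝ)^21 * ((n:ℝ)^10 * s * p^11) ≤ 3^21 * (1/x^10) := by
          apply mul_le_mul_of_nonneg_left key (by norm_num)
      _ = 3^21/x^10 := by ring
  have ha2 : (3:ℝ)^21/x^10 ≤ (1/2)^10 := by
    rw [div_le_iff₀ (by positivity)]
    calc (3:ℝ)^21 ≤ (1/2)^10 * 100^10 := by norm_num
      _ ≤ (1/2)^10 * x^10 := by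
          apply mul_le_mul_of_nonneg_left (pow_le_pow_left₀ (by norm_num) hx 10) (by norm_num)
  obtain ⟨t, rfl⟩ : ∃ t, s = t + 1 := ⟨s - 1, by omega⟩
  have hfin : ((3:ℝ)^21/x^10)^(t+1) ≤ (40/x * (1/2)^(t+1))^10 := by
    have ha0 : (0:ℝ) ≤ 3^21/x^10 := by positivity
    calc ((3:ℝ)^21/x^10)^(t+1) = (3^21/x^10) * (3^21/x^10)^t := by ring
      _ ≤ (3^21/x^10) * ((1/2)^10)^t := by
          apply mul_le_mul_of_nonneg_left (pow_le_pow_left₀ ha0 ha2 t) ha0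
      _ ≤ (40^10/x^10 * (1/2)^10) * ((1/2)^10)^t := by
          apply mul_le_mul_of_nonneg_right ?_ (by positivity)
          rw [div_le_iff₀ (by positivity), div_mul_eq_mul_div, div_mul_eq_mul_div,
            le_div_iff₀ (by positivity)]
          nlinarith [pow_pos hx0 10]
      _ = (40/x * (1/2)^(t+1))^10 := by
          simp only [mul_pow, div_pow, ← pow_mul]
          try ring
  calc (n.choose (t+1) : ℝ) * (((t+1)*(t+1)).choose m) * p ^ m
      = (n.choose (t+1) : ℝ) * (((t+1)*(t+1)).choose m) * p ^ m := rfl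
    _ ≤ 40 / x * (1/2)^(t+1) := by
        apply le_of_pow_le_pow_left₀ (by norm_num : (10:ℕ) ≠ 0) (by positivity)
        calc ((n.choose (t+1) : ℝ) * (((t+1)*(t+1)).choose m) * p ^ m)^10
            ≤ ((3*(n:ℝ)/((t+1:ℕ):ℝ))^10 * (3*((t+1:ℕ):ℝ)*p)^11)^(t+1) := h10
          _ ≤ ((3:ℝ)^21/x^10)^(t+1) := pow_le_pow_left₀ (by positivity) hbase (t+1)
          _ ≤ (40/x * (1/2)^(t+1))^10 := hfin

lemma sum_bound {n : ℕ} {p : ℝ} (h0 : 0 ≤ p) (h1 : p ≤ 1) (hx : 100 ≤ (n:ℝ)*p) :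
    ∑ s ∈ (Finset.range (n+1)).filter (fun (s : ℕ) => (s:ℝ) ≤ ((n:ℝ)*p)^(-21:ℤ) * n),
      (n.choose s : ℝ) * ((s*s).choose (mm s)) * p ^ (mm s) ≤ 80 / ((n:ℝ)*p) := by
  have hx0 : (0:ℝ) < (n:ℝ)*p := by linarith
  have hzp : ((n:ℝ)*p)^(-21:ℤ) = (((n:ℝ)*p)^(21:ℕ))⁻¹ := by
    rw [← zpow_natCast ((n:ℝ)*p) 21, ← zpow_neg]
    norm_num
  have step : ∀ s ∈ (Finset.range (n+1)).filter
      (fun (s : ℕ) => (s:ℝ) ≤ ((n:ℝ)*p)^(-21:ℤ) * n),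
      (n.choose s : ℝ) * ((s*s).choose (mm s)) * p ^ (mm s)
        ≤ 40 / ((n:ℝ)*p) * (1/2)^s := by
    intro s hsmem
    simp only [Finset.mem_filter] at hsmem
    apply term_bound h0 h1 hx
    have h2 := hsmem.2
    rw [hzp, inv_mul_eq_div, le_div_iff₀ (by positivity)] at h2
    exact h2
  calc ∑ s ∈ (Finset.range (n+1)).filter
        (fun (s : ℕ) => (s:ℝ) ≤ ((n:ℝ)*p)^(-21:ℤ) * n),
        (n.choose s : ℝ) * ((s*s).choose (mm s)) * p ^ (mm s)
      ≤ ∑ s ∈ (Finset.range (n+1)).filter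
        (fun (s : ℕ) => (s:ℝ) ≤ ((n:ℝ)*p)^(-21:ℤ) * n), 40 / ((n:ℝ)*p) * (1/2)^s :=
        Finset.sum_le_sum step
    _ ≤ ∑ s ∈ Finset.range (n+1), 40 / ((n:ℝ)*p) * (1/2)^s :=
        Finset.sum_le_sum_of_subset_of_nonneg (Finset.filter_subset _ _)
          (fun i _ _ => by positivity)
    _ = 40 / ((n:ℝ)*p) * ∑ s ∈ Finset.range (n+1), (1/2)^s := by
        rw [Finset.mul_sum]
    _ ≤ 40 / ((n:ℝ)*p) * 2 := by
        apply mul_le_mul_of_nonneg_left (sum_geometric_two_le _) (by positivity)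
    _ = 80 / ((n:ℝ)*p) := by ring

def pairsOf {n : ℕ} (S : Finset (Fin n)) : Finset (Fin n × Fin n) :=
  (S ×ˢ S).filter fun e => e.1 < e.2

lemma bad_subset {n : ℕ} {p : ℝ} :
    {A : Fin n → Fin n → Bool | ∃ S : Set (Fin n),
        (S.ncard : ℝ) ≤ ((n:ℝ)*p)^(-21:ℤ) * n ∧ ¬((edgesWithin A S : ℝ) ≤ 1.1 * S.ncard)}
    ⊆ ⋃ s ∈ (Finset.range (n+1)).filter (fun (s : ℕ) => (s:ℝ) ≤ ((n:ℝ)*p)^(-21:ℤ) * n),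
      ⋃ S ∈ Finset.powersetCard s (Finset.univ : Finset (Fin n)),
      ⋃ T ∈ Finset.powersetCard (mm s) (pairsOf S),
      {A : Fin n → Fin n → Bool | ∀ e ∈ T, A e.1 e.2 = true} := by
  intro A hA
  obtain ⟨S, hsize, hbig⟩ := hA
  push_neg at hbig
  set S' : Finset (Fin n) := S.toFinite.toFinset with hS'
  have hcard : S.ncard = S'.card := Set.ncard_eq_toFinset_card S S.toFinite
  set s := S'.card with hsdef
  set E : Set (Fin n × Fin n) :=
    {e : Fin n × Fin n | e.1 < e.2 ∧ e.1 ∈ S ∧ e.2 ∈ S ∧ GrAdj A e.1 e.2} with hE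
  set E' : Finset (Fin n × Fin n) := E.toFinite.toFinset with hE'
  have hEcard : edgesWithin A S = E'.card := Set.ncard_eq_toFinset_card E E.toFinite
  have hE'sub : E' ⊆ pairsOf S' := by
    intro e he
    rw [hE', Set.Finite.mem_toFinset] at he
    obtain ⟨hlt, h1, h2, _⟩ := he
    rw [pairsOf, Finset.mem_filter, Finset.mem_product]
    exact ⟨⟨(S.toFinite.mem_toFinset).2 h1, (S.toFinite.mem_toFinset).2 h2⟩, hlt⟩
  have hmle : mm s ≤ E'.card := by
    have hlt : ((11 * s / 10 : ℕ) : ℝ) < (E'.card : ℝ) := by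
      calc ((11 * s / 10 : ℕ) : ℝ) ≤ ((11 * s : ℕ) : ℝ) / (10 : ℕ) := Nat.cast_div_le
        _ = 1.1 * s := by push_cast; ring
        _ = 1.1 * S.ncard := by rw [hcard]
        _ < edgesWithin A S := hbig
        _ = E'.card := by rw [hEcard]
    have : 11 * s / 10 < E'.card := by exact_mod_cast hlt
    unfold mm; omega
  obtain ⟨T, hTsub, hTcard⟩ := Finset.exists_subset_card_eq hmle
  simp only [Set.mem_iUnion, exists_prop]
  refine ⟨s, ?_, S', ?_, T, ?_, ?_⟩
  · rw [Finset.mem_filter, Finset.mem_range]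
    constructor
    · have := Finset.card_le_univ S'
      simp only [Finset.card_univ, Fintype.card_fin] at this
      omega
    · calc ((S'.card : ℕ) : ℝ) = (S.ncard : ℝ) := by exact_mod_cast hcard.symm
        _ ≤ _ := hsize
  · rw [Finset.mem_powersetCard]
    exact ⟨Finset.subset_univ _, rfl⟩
  · rw [Finset.mem_powersetCard]
    exact ⟨hTsub.trans hE'sub, hTcard⟩
  · intro e heT
    have he : e ∈ E := by
      rw [← Set.Finite.mem_toFinset E.toFinite]
      exact hTsub heT
    obtain ⟨hlt, _, _, _, hadj⟩ := he
    rwa [min_eq_left hlt.le, max_eq_right hlt.le] at hadj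

lemma measure_bad_le {n : ℕ} {p : ℝ} (h0 : 0 ≤ p) (h1 : p ≤ 1) :
    erMeasure n p {A : Fin n → Fin n → Bool | ∃ S : Set (Fin n),
        (S.ncard : ℝ) ≤ ((n:ℝ)*p)^(-21:ℤ) * n ∧ ¬((edgesWithin A S : ℝ) ≤ 1.1 * S.ncard)}
    ≤ ENNReal.ofReal (∑ s ∈ (Finset.range (n+1)).filter
        (fun (s : ℕ) => (s:ℝ) ≤ ((n:ℝ)*p)^(-21:ℤ) * n),
        (n.choose s : ℝ) * ((s*s).choose (mm s)) * p ^ (mm s)) := by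
  set F := (Finset.range (n+1)).filter (fun (s : ℕ) => (s:ℝ) ≤ ((n:ℝ)*p)^(-21:ℤ) * n) with hF
  set q : ENNReal := ENNReal.ofReal p with hq
  calc erMeasure n p _ ≤ erMeasure n p (⋃ s ∈ F,
        ⋃ S ∈ Finset.powersetCard s (Finset.univ : Finset (Fin n)),
        ⋃ T ∈ Finset.powersetCard (mm s) (pairsOf S),
        {A : Fin n → Fin n → Bool | ∀ e ∈ T, A e.1 e.2 = true}) :=
      measure_mono bad_subset
    _ ≤ ∑ s ∈ F, erMeasure n p (⋃ S ∈ Finset.powersetCard s (Finset.univ : Finset (Fin n)),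
        ⋃ T ∈ Finset.powersetCard (mm s) (pairsOf S),
        {A : Fin n → Fin n → Bool | ∀ e ∈ T, A e.1 e.2 = true}) :=
      measure_biUnion_finset_le _ _
    _ ≤ ∑ s ∈ F, (n.choose s : ENNReal) * (((s*s).choose (mm s) : ENNReal) * q ^ (mm s)) := by
      apply Finset.sum_le_sum
      intro s _
      calc erMeasure n p _
          ≤ ∑ S ∈ Finset.powersetCard s (Finset.univ : Finset (Fin n)),
            erMeasure n p (⋃ T ∈ Finset.powersetCard (mm s) (pairsOf S),
              {A : Fin n → Fin n → Bool | ∀ e ∈ T, A e.1 e.2 = true}) :=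
          measure_biUnion_finset_le _ _
        _ ≤ ∑ S ∈ Finset.powersetCard s (Finset.univ : Finset (Fin n)),
            (((s*s).choose (mm s) : ENNReal) * q ^ (mm s)) := by
          apply Finset.sum_le_sum
          intro S hS
          have hScard : S.card = s := (Finset.mem_powersetCard.mp hS).2
          calc erMeasure n p _
              ≤ ∑ T ∈ Finset.powersetCard (mm s) (pairsOf S),
                erMeasure n p {A : Fin n → Fin n → Bool | ∀ e ∈ T, A e.1 e.2 = true} :=
              measure_biUnion_finset_le _ _
            _ = ∑ T ∈ Finset.powersetCard (mm s) (pairsOf S), q ^ (mm s) := by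
              apply Finset.sum_congr rfl
              intro T hT
              rw [erMeasure_cyl h0 h1, (Finset.mem_powersetCard.mp hT).2]
            _ = ((pairsOf S).card.choose (mm s) : ENNReal) * q ^ (mm s) := by
              rw [Finset.sum_const, Finset.card_powersetCard, nsmul_eq_mul]
            _ ≤ (((s*s).choose (mm s)) : ENNReal) * q ^ (mm s) := by
              apply mul_le_mul_left
              have hple : (pairsOf S).card ≤ s * s := by
                calc (pairsOf S).card ≤ (S ×ˢ S).card :=
                    Finset.card_le_card (Finset.filter_subset _ _)
                  _ = s * s := by rw [Finset.card_product, hScard]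
              exact_mod_cast Nat.choose_le_choose (mm s) hple
        _ = (n.choose s : ENNReal) * (((s*s).choose (mm s) : ENNReal) * q ^ (mm s)) := by
          rw [Finset.sum_const, Finset.card_powersetCard, Finset.card_univ, Fintype.card_fin,
            nsmul_eq_mul]
    _ = ∑ s ∈ F, ENNReal.ofReal ((n.choose s : ℝ) * ((s*s).choose (mm s)) * p ^ (mm s)) := by
      apply Finset.sum_congr rfl
      intro s _
      rw [ENNReal.ofReal_mul (by positivity), ENNReal.ofReal_mul (by positivity),
        ENNReal.ofReal_pow h0, ENNReal.ofReal_natCast, ENNReal.ofReal_natCast, hq, mul_assoc]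
    _ = ENNReal.ofReal (∑ s ∈ F, (n.choose s : ℝ) * ((s*s).choose (mm s)) * p ^ (mm s)) := by
      rw [ENNReal.ofReal_sum_of_nonneg]
      intro s _
      positivity

end Aux

/-- If `n·pₙ → ∞` then whp every vertex set `S` of `𝔾(n,pₙ)` with
`|S| ≤ (n·pₙ)^{−21}·n` spans at most `1.1·|S|` edges. -/
theorem whp_small_sets_very_sparse (p : ℕ → ℝ) (hp : ∀ n, p n ∈ Set.Icc (0 : ℝ) 1)
    (hgrow : Tendsto (fun n : ℕ => (n : ℝ) * p n) atTop atTop) :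
    Tendsto (fun n => erMeasure n (p n)
        {A | ∀ S : Set (Fin n), (S.ncard : ℝ) ≤ ((n : ℝ) * p n) ^ (-21 : ℤ) * n →
          ((edgesWithin A S : ℝ)) ≤ 1.1 * S.ncard})
      atTop (nhds 1) := by
  have hprob : ∀ n, IsProbabilityMeasure (erMeasure n (p n)) := by
    intro n
    have : IsProbabilityMeasure (bernoulliM (p n)) :=
      ⟨bernoulliM_univ (hp n).1 (hp n).2⟩
    rw [erMeasure]
    infer_instance
  -- bad measure tends to 0
  have hbad : Tendsto (fun n : ℕ => erMeasure n (p n)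
      {A : Fin n → Fin n → Bool | ∃ S : Set (Fin n),
        (S.ncard : ℝ) ≤ ((n:ℝ)*(p n))^(-21:ℤ) * n ∧
        ¬((edgesWithin A S : ℝ) ≤ 1.1 * S.ncard)}) atTop (nhds 0) := by
    have h100 : ∀ᶠ n : ℕ in atTop, (100:ℝ) ≤ (n:ℝ) * p n := hgrow.eventually_ge_atTop 100
    have hupper : ∀ᶠ n : ℕ in atTop, erMeasure n (p n)
        {A : Fin n → Fin n → Bool | ∃ S : Set (Fin n),
          (S.ncard : ℝ) ≤ ((n:ℝ)*(p n))^(-21:ℤ) * n ∧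
          ¬((edgesWithin A S : ℝ) ≤ 1.1 * S.ncard)}
        ≤ ENNReal.ofReal (80 / ((n:ℝ) * p n)) := by
      filter_upwards [h100] with n h100n
      calc erMeasure n (p n) _ ≤ _ := measure_bad_le (hp n).1 (hp n).2
        _ ≤ ENNReal.ofReal (80 / ((n:ℝ) * p n)) :=
          ENNReal.ofReal_le_ofReal (sum_bound (hp n).1 (hp n).2 h100n)
    have hof : Tendsto (fun n : ℕ => ENNReal.ofReal (80 / ((n:ℝ) * p n))) atTop (nhds 0) := by
      rw [show (0 : ENNReal) = ENNReal.ofReal 0 by simp]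
      apply ENNReal.tendsto_ofReal
      have : Tendsto (fun n : ℕ => ((n:ℝ) * p n)⁻¹) atTop (nhds 0) := hgrow.inv_tendsto_atTop
      have h80 := this.const_mul (80:ℝ)
      simpa [div_eq_mul_inv] using h80
    exact tendsto_of_tendsto_of_tendsto_of_le_of_le' tendsto_const_nhds hof
      (Eventually.of_forall (fun n => zero_le)) hupper
  -- good event
  have hsplit : ∀ n : ℕ, (1 : ENNReal) ≤ erMeasure n (p n)
      {A | ∀ S : Set (Fin n), (S.ncard : ℝ) ≤ ((n : ℝ) * p n) ^ (-21 : ℤ) * n →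
          ((edgesWithin A S : ℝ)) ≤ 1.1 * S.ncard}
      + erMeasure n (p n) {A : Fin n → Fin n → Bool | ∃ S : Set (Fin n),
        (S.ncard : ℝ) ≤ ((n:ℝ)*(p n))^(-21:ℤ) * n ∧
        ¬((edgesWithin A S : ℝ) ≤ 1.1 * S.ncard)} := by
    intro n
    have : (1 : ENNReal) = erMeasure n (p n) Set.univ := ((hprob n).measure_univ).symm
    rw [this]
    have hsub : (Set.univ : Set (Fin n → Fin n → Bool)) ⊆
        {A | ∀ S : Set (Fin n), (S.ncard : ℝ) ≤ ((n : ℝ) * p n) ^ (-21 : ℤ) * n →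
          ((edgesWithin A S : ℝ)) ≤ 1.1 * S.ncard}
        ∪ {A : Fin n → Fin n → Bool | ∃ S : Set (Fin n),
          (S.ncard : ℝ) ≤ ((n:ℝ)*(p n))^(-21:ℤ) * n ∧
          ¬((edgesWithin A S : ℝ) ≤ 1.1 * S.ncard)} := by
      intro A _
      by_cases hA : ∀ S : Set (Fin n), (S.ncard : ℝ) ≤ ((n : ℝ) * p n) ^ (-21 : ℤ) * n →
          ((edgesWithin A S : ℝ)) ≤ 1.1 * S.ncard
      · exact Or.inl hA
      · right
        push_neg at hA
        obtain ⟨S, h1, h2⟩ := hA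
        exact ⟨S, h1, by push_neg; exact h2⟩
    exact le_trans (measure_mono hsub) (measure_union_le _ _)
  -- squeeze
  have hone : Tendsto (fun n : ℕ => (1:ENNReal) - erMeasure n (p n)
      {A : Fin n → Fin n → Bool | ∃ S : Set (Fin n),
        (S.ncard : ℝ) ≤ ((n:ℝ)*(p n))^(-21:ℤ) * n ∧
        ¬((edgesWithin A S : ℝ) ≤ 1.1 * S.ncard)}) atTop (nhds 1) := by
    have := ENNReal.Tendsto.sub (tendsto_const_nhds (x := (1:ENNReal))) hbad
      (Or.inl (by norm_num))
    simpa using this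
  apply tendsto_of_tendsto_of_tendsto_of_le_of_le hone tendsto_const_nhds
  · intro n
    have := hsplit n
    exact tsub_le_iff_right.mpr this
  · intro n
    exact (hprob n).measure_univ ▸ measure_mono (Set.subset_univ _)
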